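/- arXiv:2403.04495 — 3 statements merged into one kernel-verified Lean document; each statement's English description precedes it below -/
import Mathlib

section
/- Let m ≥ 2 and r ≥ 1 be integers and take m_1 = m_2 = … = m_r = m. Then there exist integers β_{(j_1,…,j_s)}, indexed by the nonempty sequences 1 ≤ j_1 < … < j_s ≤ r with 1 ≤ s ≤ r−1, such that H_{(m,…,m)} (r copies) = m^{1+2+⋯+r} · h_r − Σ_{s=1}^{r−1} Σ_{1 ≤ j_1 < … < j_s ≤ r} β_{(j_1,…,j_s)} · H_{(m,…,m)} (s copies appearing according to the index sequence), and each β_{(j_1,…,j_s)} is divisible by m^{r−s}/gcd(m, 2). -/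
/-- The operator `U_m` on `ℤ⟦q⟧`, sending `∑ a(n) qⁿ` to `∑ a(m·n) qⁿ`. -/
noncomputable def U (m : ℕ) (f : PowerSeries ℤ) : PowerSeries ℤ :=
  PowerSeries.mk fun n => PowerSeries.coeff (m * n) f

/-- `h r = q / (1-q)^(r+1)`; here `invUnitsSub 1` is the inverse of `1 - q` in `ℤ⟦q⟧`. -/
noncomputable def h (r : ℕ) : PowerSeries ℤ :=
  PowerSeries.X * (PowerSeries.invUnitsSub (1 : ℤˣ)) ^ (r + 1)

/-- Auxiliary: the series `H` defined by recursion on a reversed index list. -/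
noncomputable def HserRev : List ℕ → PowerSeries ℤ
  | [] => PowerSeries.X * PowerSeries.invUnitsSub (1 : ℤˣ)
  | mhead :: rest => U mhead (PowerSeries.invUnitsSub (1 : ℤˣ) * HserRev rest)

/-- `Hser [m₁, …, m_k] = H_{(m₁,…,m_k)}`: one has `Hser [] = H_∅ = q/(1-q)` and
`H_{(m₁,…,m_k)} = U_{m_k}((1/(1-q)) · H_{(m₁,…,m_{k-1})})`. -/
noncomputable def Hser (l : List ℕ) : PowerSeries ℤ := HserRev l.reverse


open Finset PowerSeries


/-- Iterated forward differences at 0 of `n ↦ (m*n + t).choose k`. -/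
def Adiff (m : ℕ) : ℕ → ℕ → ℕ → ℕ
  | 0, k, t => t.choose k
  | j+1, k, t => ∑ v ∈ Finset.range m, Adiff m j (k-1) (t+v)

lemma Adiff_zero (m k t : ℕ) : Adiff m 0 k t = t.choose k := rfl

lemma Adiff_succ (m j k t : ℕ) :
    Adiff m (j+1) k t = ∑ v ∈ range m, Adiff m j (k-1) (t+v) := rfl

lemma choose_add_sum (a M k : ℕ) :
    (a + M).choose (k+1) = a.choose (k+1) + ∑ v ∈ range M, (a+v).choose k := by
  induction M with
  | zero => simp
  | succ M ih =>
    rw [sum_range_succ, show a + (M+1) = (a+M)+1 by omega, Nat.choose_succ_succ' (a+M) k, ih]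
    ring

lemma newton (m : ℕ) : ∀ n k t, (m*n + t).choose k
    = ∑ j ∈ range (k+1), Adiff m j k t * n.choose j := by
  intro n
  induction n with
  | zero =>
    intro k t
    rw [Finset.sum_eq_single_of_mem 0 (by simp) (fun j _ hj => by
      rw [Nat.choose_eq_zero_of_lt (Nat.pos_of_ne_zero hj), Nat.mul_zero])]
    simp [Adiff]
  | succ n ih =>
    intro k t
    cases k with
    | zero => simp [Adiff]
    | succ k =>
      have step : (m*(n+1) + t).choose (k+1)
          = (m*n + t).choose (k+1) + ∑ v ∈ range m, (m*n + (t+v)).choose k := by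
        have h := choose_add_sum (m*n + t) m k
        rw [show m*(n+1) + t = m*n + t + m by ring, h]
        congr 1
        exact sum_congr rfl fun v _ => by rw [show m*n + t + v = m*n + (t+v) by ring]
      rw [step, ih (k+1) t]
      have hv : ∀ v ∈ range m, (m*n + (t+v)).choose k
          = ∑ j ∈ range (k+1), Adiff m j k (t+v) * n.choose j :=
        fun v _ => ih k (t+v)
      rw [sum_congr rfl hv, sum_comm]
      have hswap : ∀ j ∈ range (k+1),
          ∑ v ∈ range m, Adiff m j k (t+v) * n.choose j
            = Adiff m (j+1) (k+1) t * n.choose j := by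
        intro j _
        rw [Adiff_succ, Nat.add_sub_cancel, sum_mul]
      rw [sum_congr rfl hswap]
      -- now: Σ_{j∈range(k+2)} A j (k+1) t * C(n,j) + Σ_{j∈range(k+1)} A (j+1) (k+1) t * C(n,j)
      --    = Σ_{j∈range(k+2)} A j (k+1) t * C(n+1,j)
      rw [sum_range_succ' (fun j => Adiff m j (k+1) t * (n+1).choose j) (k+1)]
      simp only [Nat.choose_succ_succ' n, Nat.choose_zero_right, Nat.mul_add]
      rw [sum_add_distrib]
      rw [sum_range_succ' (fun j => Adiff m j (k+1) t * n.choose j) (k+1)]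
      simp only [Nat.choose_zero_right]
      ring

lemma Adiff_top (m : ℕ) : ∀ k t, Adiff m k k t = m ^ k := by
  intro k
  induction k with
  | zero => intro t; simp [Adiff]
  | succ k ih =>
    intro t
    rw [Adiff_succ, Nat.add_sub_cancel]
    simp [ih, pow_succ, mul_comm]

lemma Adiff_sub (m : ℕ) : ∀ k t, 2 * Adiff m k (k+1) t = m ^ k * (k*(m-1) + 2*t) := by
  intro k
  induction k with
  | zero => intro t; simp [Adiff, Nat.choose_one_right]
  | succ k ih =>
    intro t
    rw [Adiff_succ, Nat.add_sub_cancel, Finset.mul_sum]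
    have : ∀ v ∈ range m, 2 * Adiff m k (k+1) (t+v) = m ^ k * (k*(m-1) + 2*t) + m^k * (2*v) := by
      intro v _
      rw [ih (t+v)]
      ring
    rw [sum_congr rfl this, sum_add_distrib, sum_const, card_range, ← Finset.mul_sum]
    have hg : (∑ v ∈ range m, 2*v) = m * (m-1) := by
      have := Finset.sum_range_id_mul_two m
      calc ∑ v ∈ range m, 2*v = (∑ v ∈ range m, v) * 2 := by
            rw [Finset.sum_mul]; exact sum_congr rfl fun v _ => by ring
        _ = m * (m-1) := this
    rw [hg, smul_eq_mul]
    generalize (m-1) = d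
    ring

noncomputable def Sser : PowerSeries ℤ := PowerSeries.invUnitsSub (1 : ℤˣ)

lemma Sser_mul_one_sub : Sser * (1 - X) = 1 := by
  have := PowerSeries.invUnitsSub_mul_sub (1 : ℤˣ)
  simpa [Sser] using this

lemma one_sub_X_ne_zero : (1 - X : PowerSeries ℤ) ≠ 0 := by
  intro hc
  have : (Sser * (1 - X)) = 0 := by rw [hc, mul_zero]
  rw [Sser_mul_one_sub] at this
  exact one_ne_zero this

lemma invOneSubPow_val_eq (d : ℕ) : (invOneSubPow ℤ d).val = Sser ^ d := by
  rw [invOneSubPow_eq_inv_one_sub_pow, Units.val_pow_eq_pow_val]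
  congr 1
  rw [Sser, ← invOneSubPow_val_one_eq_invUnitSub_one (S := ℤ),
    invOneSubPow_eq_inv_one_sub_pow, pow_one]

lemma coeff_Sser_pow (d n : ℕ) : coeff n (Sser ^ (d+1)) = (d + n).choose d := by
  rw [← invOneSubPow_val_eq, invOneSubPow_val_succ_eq_mk_add_choose, coeff_mk]

lemma coeff_h_zero (r : ℕ) : coeff 0 (h r) = 0 := by
  rw [h, coeff_zero_eq_constantCoeff, map_mul, constantCoeff_X, zero_mul]

lemma coeff_h_succ (r n : ℕ) : coeff (n+1) (h r) = ((r + n).choose r : ℤ) := by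
  rw [h, coeff_succ_X_mul]
  exact coeff_Sser_pow r n

lemma coeff_U (m : ℕ) (f : PowerSeries ℤ) (n : ℕ) : coeff n (U m f) = coeff (m*n) f :=
  coeff_mk _ _

lemma U_add (m : ℕ) (f g : PowerSeries ℤ) : U m (f + g) = U m f + U m g := by
  ext n; simp [coeff_U]

lemma U_sub (m : ℕ) (f g : PowerSeries ℤ) : U m (f - g) = U m f - U m g := by
  ext n; simp [coeff_U]

lemma U_C_mul (m : ℕ) (a : ℤ) (f : PowerSeries ℤ) : U m (C a * f) = C a * U m f := by
  ext n
  rw [coeff_U, PowerSeries.coeff_C_mul, PowerSeries.coeff_C_mul, coeff_U]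

lemma U_sum (m : ℕ) {α : Type} (s : Finset α) (F : α → PowerSeries ℤ) :
    U m (∑ i ∈ s, F i) = ∑ i ∈ s, U m (F i) := by
  ext n
  rw [coeff_U, map_sum, map_sum]
  exact Finset.sum_congr rfl fun i _ => (coeff_U m (F i) n).symm

noncomputable def gser (j : ℕ) : PowerSeries ℤ := X ^ j * Sser ^ (j+1)

lemma coeff_gser (j n : ℕ) : coeff n (gser j) = (n.choose j : ℤ) := by
  rw [gser, coeff_X_pow_mul']
  rcases le_or_gt j n with hle | hlt
  · rw [if_pos hle, coeff_Sser_pow, Nat.add_sub_cancel' hle]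
  · rw [if_neg (not_le.mpr hlt), Nat.choose_eq_zero_of_lt hlt, Nat.cast_zero]

def gam (m r i : ℕ) : ℤ :=
  ∑ j ∈ Icc i r, ((-1)^(j-i) * ((j-1).choose (j-i) : ℤ)) * (Adiff m j r (r-1) : ℤ)

lemma h_eq (i : ℕ) : h i = X * Sser ^ (i+1) := rfl

lemma U_h_gser (m r : ℕ) (hm : 1 ≤ m) (hr : 1 ≤ r) :
    U m (h r) = ∑ j ∈ Icc 1 r, C ((Adiff m j r (r-1) : ℤ)) * gser j := by
  ext n
  rw [coeff_U, map_sum]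
  have hterm : ∀ j ∈ Icc 1 r,
      coeff n (C ((Adiff m j r (r-1) : ℤ)) * gser j)
        = (Adiff m j r (r-1) : ℤ) * (n.choose j : ℤ) := by
    intro j hj
    rw [PowerSeries.coeff_C_mul, coeff_gser]
  rw [sum_congr rfl hterm]
  cases n with
  | zero =>
    rw [Nat.mul_zero, coeff_h_zero]
    symm
    apply Finset.sum_eq_zero
    intro j hj
    rw [mem_Icc] at hj
    rw [Nat.choose_eq_zero_of_lt hj.1, Nat.cast_zero, mul_zero]
  | succ n =>
    have hmn : 1 ≤ m * (n+1) := Nat.mul_pos (by omega) (by omega)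
    have hco : coeff (m * (n+1)) (h r) = (((m*(n+1)) + (r-1)).choose r : ℤ) := by
      obtain ⟨w, hw⟩ : ∃ w, m * (n+1) = w + 1 := ⟨m*(n+1) - 1, by omega⟩
      rw [hw, coeff_h_succ]
      congr 2
      omega
    rw [hco]
    have hnewton := newton m (n+1) r (r-1)
    have : ((m*(n+1) + (r-1)).choose r : ℤ)
        = ((∑ j ∈ range (r+1), Adiff m j r (r-1) * (n+1).choose j : ℕ) : ℤ) := by
      exact_mod_cast congrArg (Nat.cast : ℕ → ℤ) hnewton
    rw [this, Nat.cast_sum]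
    rw [Finset.range_eq_Ico, Finset.sum_eq_sum_Ico_succ_bot (by omega : 0 < r + 1)]
    have h0 : (Adiff m 0 r (r-1) * (n+1).choose 0 : ℕ) = 0 := by
      rw [Adiff_zero, Nat.choose_eq_zero_of_lt (by omega : r - 1 < r), Nat.zero_mul]
    rw [h0, Nat.cast_zero, zero_add]
    rw [show Ico (0+1) (r+1) = Icc 1 r by rfl]
    push_cast
    rfl

lemma sum_pow_one_sub (j : ℕ) (hj : 1 ≤ j) :
    ∑ k ∈ range j, C ((-1)^k * ((j-1).choose k : ℤ)) * (1 - X)^k = X^(j-1) := by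
  have hap := add_pow (-(1-(X:PowerSeries ℤ))) (1 : PowerSeries ℤ) (j-1)
  rw [show (-(1-(X:PowerSeries ℤ)) + 1) = X by ring, show j - 1 + 1 = j by omega] at hap
  rw [hap]
  apply sum_congr rfl
  intro k _
  rw [one_pow, mul_one, map_mul, map_pow, map_neg, map_one, map_natCast,
    show (-(1 - X) : PowerSeries ℤ) = (-1) * (1-X) by ring, mul_pow]
  ring

lemma gser_eq_h (j : ℕ) (hj : 1 ≤ j) :
    gser j = ∑ i ∈ Icc 1 j, C ((-1)^(j-i) * ((j-1).choose (j-i) : ℤ)) * h i := by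
  apply mul_right_cancel₀ (pow_ne_zero (j+1) one_sub_X_ne_zero)
  have hLHS : gser j * (1-X)^(j+1) = X^j := by
    rw [gser, mul_assoc, ← mul_pow, Sser_mul_one_sub, one_pow, mul_one]
  rw [hLHS, Finset.sum_mul]
  have hterm : ∀ i ∈ Icc 1 j,
      (C ((-1)^(j-i) * ((j-1).choose (j-i) : ℤ)) * h i) * (1-X)^(j+1)
        = X * (C ((-1)^(j-i) * ((j-1).choose (j-i) : ℤ)) * (1-X)^(j-i)) := by
    intro i hi
    rw [mem_Icc] at hi
    rw [h_eq, show j+1 = (i+1) + (j-i) by omega,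
      pow_add ((1 : PowerSeries ℤ) - X) (i+1) (j-i)]
    have hS : Sser^(i+1) * (1-X)^(i+1) = 1 := by
      rw [← mul_pow, Sser_mul_one_sub, one_pow]
    generalize (C ((-1)^(j-i) * ((j-1).choose (j-i) : ℤ)) : PowerSeries ℤ) = Cc
    generalize Sser^(i+1) = Sp at hS
    generalize ((1-X) : PowerSeries ℤ)^(i+1) = O1 at hS
    generalize ((1-X) : PowerSeries ℤ)^(j-i) = O2
    calc Cc * (X * Sp) * (O1 * O2) = X * (Cc * O2) * (Sp * O1) := by ring
      _ = X * (Cc * O2) := by rw [hS, mul_one]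
  rw [sum_congr rfl hterm, ← Finset.mul_sum]
  have hre : ∑ i ∈ Icc 1 j, C ((-1)^(j-i) * ((j-1).choose (j-i) : ℤ)) * (1-X)^(j-i)
      = ∑ k ∈ range j, C ((-1)^k * ((j-1).choose k : ℤ)) * (1-X)^k := by
    apply Finset.sum_nbij' (fun i => j - i) (fun k => j - k)
    · intro i hi; rw [mem_Icc] at hi; rw [mem_range]; omega
    · intro k hk; rw [mem_range] at hk; rw [mem_Icc]; omega
    · intro i hi; rw [mem_Icc] at hi; omega
    · intro k hk; rw [mem_range] at hk; omega
    · intro i hi; rfl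
  rw [hre, sum_pow_one_sub j hj, ← pow_succ', show j - 1 + 1 = j by omega]

lemma U_h_eq_gam (m r : ℕ) (hm : 1 ≤ m) (hr : 1 ≤ r) :
    U m (h r) = ∑ i ∈ Icc 1 r, C (gam m r i) * h i := by
  rw [U_h_gser m r hm hr]
  have hstep : ∀ j ∈ Icc 1 r,
      C ((Adiff m j r (r-1) : ℤ)) * gser j
        = ∑ i ∈ Icc 1 j, C (((-1)^(j-i) * ((j-1).choose (j-i) : ℤ)) * (Adiff m j r (r-1) : ℤ)) * h i := by
    intro j hj
    rw [mem_Icc] at hj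
    rw [gser_eq_h j hj.1, Finset.mul_sum]
    apply sum_congr rfl
    intro i _
    simp only [map_mul]
    ring
  rw [sum_congr rfl hstep]
  have hIcc : ∀ s t : ℕ, Icc s t = Ico s (t+1) := fun s t => rfl
  simp only [hIcc]
  rw [show (∑ j ∈ Ico 1 (r+1), ∑ i ∈ Ico 1 (j+1),
        C (((-1)^(j-i) * ((j-1).choose (j-i) : ℤ)) * (Adiff m j r (r-1) : ℤ)) * h i)
      = ∑ i ∈ Ico 1 (r+1), ∑ j ∈ Ico i (r+1),
        C (((-1)^(j-i) * ((j-1).choose (j-i) : ℤ)) * (Adiff m j r (r-1) : ℤ)) * h i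
    from (Finset.sum_Ico_Ico_comm 1 (r+1) _).symm]
  apply sum_congr rfl
  intro i _
  rw [← Finset.sum_mul, ← map_sum, gam, hIcc]

lemma gam_top (m r : ℕ) (hr : 1 ≤ r) : gam m r r = (m:ℤ)^r := by
  rw [gam, Finset.Icc_self, sum_singleton, Nat.sub_self, pow_zero, Nat.choose_zero_right,
    Adiff_top, Nat.cast_one, mul_one, one_mul, Nat.cast_pow]

lemma gam_sub_eq (m Q : ℕ) (hm : 1 ≤ m) :
    2 * gam m (Q+2) (Q+1) = -((m:ℤ)^(Q+1) * (Q+1) * ((m:ℤ)-1)) := by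
  rw [gam, Finset.sum_Icc_succ_top (by omega : Q+1 ≤ Q+2), Finset.Icc_self, sum_singleton]
  rw [Nat.sub_self, pow_zero, Nat.choose_zero_right]
  rw [show Q+2-(Q+1) = 1 by omega, show Q+2-1 = Q+1 by omega, pow_one,
    Nat.choose_one_right]
  have h1 : ((2:ℤ)) * (Adiff m (Q+1) (Q+2) (Q+1) : ℤ)
      = (m:ℤ)^(Q+1) * (((Q:ℤ)+1) * ((m:ℤ)-1) + 2*((Q:ℤ)+1)) := by
    have := Adiff_sub m (Q+1) (Q+1)
    have hc := congrArg (Nat.cast : ℕ → ℤ) this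
    push_cast [Nat.cast_sub hm] at hc
    push_cast
    linarith
  have h2 : (Adiff m (Q+2) (Q+2) (Q+1) : ℤ) = (m:ℤ)^(Q+2) := by
    have := Adiff_top m (Q+2) (Q+1)
    exact_mod_cast congrArg (Nat.cast : ℕ → ℤ) this
  simp only [show Q+1+1 = Q+2 by omega]
  push_cast
  linear_combination h1 - 2*((Q:ℤ)+1)*h2

lemma gcd_two_of_even {m : ℕ} (hme : 2 ∣ m) : Nat.gcd m 2 = 2 :=
  Nat.gcd_eq_right hme

lemma gcd_two_of_odd {m : ℕ} (hmo : Odd m) : Nat.gcd m 2 = 1 :=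
  hmo.coprime_two_right

lemma gcd_dvd_pow_lem {m : ℕ} (k : ℕ) (hk : 1 ≤ k) : Nat.gcd m 2 ∣ m ^ k :=
  dvd_trans (Nat.gcd_dvd_left m 2) (dvd_pow_self m (by omega))

/-- F2 : `m^(a+b)/g = (m^a/g) * m^b` as integers, for `a ≥ 1`. -/
lemma pow_div_gcd_add {m : ℕ} (a b : ℕ) (ha : 1 ≤ a) :
    ((m^(a+b) / Nat.gcd m 2 : ℕ) : ℤ) = ((m^a / Nat.gcd m 2 : ℕ) : ℤ) * (m:ℤ)^b := by
  have h : m^(a+b) / Nat.gcd m 2 = (m^a / Nat.gcd m 2) * m^b := by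
    rw [pow_add, Nat.mul_comm (m^a), Nat.mul_div_assoc _ (gcd_dvd_pow_lem a ha), Nat.mul_comm]
  rw [h]
  push_cast
  ring

/-- F1 : `(m^k/g) ∣ m^k` as integers, for `k ≥ 1`. -/
lemma pow_div_gcd_dvd_pow {m : ℕ} (k : ℕ) (hk : 1 ≤ k) :
    ((m^k / Nat.gcd m 2 : ℕ) : ℤ) ∣ (m:ℤ)^k := by
  have h : (m^k / Nat.gcd m 2) * Nat.gcd m 2 = m^k := Nat.div_mul_cancel (gcd_dvd_pow_lem k hk)
  exact ⟨(Nat.gcd m 2 : ℤ), by rw [← Nat.cast_mul, h]; push_cast; ring⟩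

lemma gam_sub_dvd1 (m Q : ℕ) (hm : 2 ≤ m) :
    ((m / Nat.gcd m 2 : ℕ) : ℤ) ∣ gam m (Q+2) (Q+1) := by
  have key := gam_sub_eq m Q (by omega)
  rcases Nat.even_or_odd m with hme | hmo
  · obtain ⟨c, hc⟩ := hme
    have hmc : (m:ℤ) = 2*(c:ℤ) := by push_cast [hc]; ring
    have hγ : gam m (Q+2) (Q+1)
        = -((c:ℤ) * (2*(c:ℤ))^Q * ((Q:ℤ)+1) * (2*(c:ℤ)-1)) := by
      apply mul_left_cancel₀ (two_ne_zero : (2:ℤ) ≠ 0)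
      rw [key, hmc]
      push_cast
      ring
    have hdiv : m / Nat.gcd m 2 = c := by
      rw [gcd_two_of_even ⟨c, by omega⟩]
      omega
    rw [hdiv, hγ]
    exact ⟨-((2*(c:ℤ))^Q * ((Q:ℤ)+1) * (2*(c:ℤ)-1)), by ring⟩
  · obtain ⟨c, hc⟩ := hmo
    have hm1 : (m:ℤ) - 1 = 2*(c:ℤ) := by push_cast [hc]; ring
    have hγ : gam m (Q+2) (Q+1) = -((m:ℤ)^(Q+1) * ((Q:ℤ)+1) * (c:ℤ)) := by
      apply mul_left_cancel₀ (two_ne_zero : (2:ℤ) ≠ 0)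
      rw [key, hm1]
      push_cast
      ring
    have hdiv : m / Nat.gcd m 2 = m := by rw [gcd_two_of_odd ⟨c, hc⟩]; omega
    rw [hdiv, hγ]
    exact ⟨-((m:ℤ)^Q * ((Q:ℤ)+1) * (c:ℤ)), by push_cast; ring⟩

lemma gam_sub_dvd2 (m Q : ℕ) (hm : 2 ≤ m) (hQ : 1 ≤ Q) :
    (m : ℤ) ∣ gam m (Q+2) (Q+1) := by
  have key := gam_sub_eq m Q (by omega)
  obtain ⟨P, hP⟩ : ∃ P, Q = P+1 := ⟨Q-1, by omega⟩
  rcases Nat.even_or_odd m with hme | hmo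
  · obtain ⟨c, hc⟩ := hme
    have hmc : (m:ℤ) = 2*(c:ℤ) := by push_cast [hc]; ring
    have hγ : gam m (Q+2) (Q+1)
        = -((c:ℤ) * (2*(c:ℤ))^Q * ((Q:ℤ)+1) * (2*(c:ℤ)-1)) := by
      apply mul_left_cancel₀ (two_ne_zero : (2:ℤ) ≠ 0)
      rw [key, hmc]
      push_cast
      ring
    rw [hγ, hmc, hP]
    exact ⟨-((c:ℤ) * (2*(c:ℤ))^P * ((P:ℤ)+1+1) * (2*(c:ℤ)-1)), by push_cast; ring⟩
  · obtain ⟨c, hc⟩ := hmo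
    have hm1 : (m:ℤ) - 1 = 2*(c:ℤ) := by push_cast [hc]; ring
    have hγ : gam m (Q+2) (Q+1) = -((m:ℤ)^(Q+1) * ((Q:ℤ)+1) * (c:ℤ)) := by
      apply mul_left_cancel₀ (two_ne_zero : (2:ℤ) ≠ 0)
      rw [key, hm1]
      push_cast
      ring
    rw [hγ]
    exact ⟨-((m:ℤ)^Q * ((Q:ℤ)+1) * (c:ℤ)), by ring⟩

def T (r : ℕ) : ℕ := ∑ t ∈ Icc 1 r, t

lemma T_split (i N : ℕ) (hi : i ≤ N) :
    T i + ∑ t ∈ Icc (i+1) N, t = T N := by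
  rw [T, T, show Icc 1 i = Ico 1 (i+1) from rfl, show Icc (i+1) N = Ico (i+1) (N+1) from rfl,
    show Icc 1 N = Ico 1 (N+1) from rfl]
  exact Finset.sum_Ico_consecutive _ (by omega) (by omega)

lemma Dexp_ge (s Q : ℕ) (hs1 : 1 ≤ s) (hs : s ≤ Q) :
    Q+2-s ≤ ∑ t ∈ Icc (s+1) (Q+1), t := by
  calc Q+2-s ≤ (Icc (s+1) (Q+1)).card * 2 := by rw [Nat.card_Icc]; omega
    _ = (Icc (s+1) (Q+1)).card • 2 := by rw [smul_eq_mul]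
    _ ≤ ∑ t ∈ Icc (s+1) (Q+1), t :=
        Finset.card_nsmul_le_sum _ _ _ (fun t ht => by rw [mem_Icc] at ht; omega)


lemma sum_triangle {M : Type*} [AddCommMonoid M] (N : ℕ) (F : ℕ → ℕ → M) :
    ∑ i ∈ Icc 1 N, ∑ t ∈ Icc 1 (i-1), F i t
      = ∑ s ∈ Icc 1 N, ∑ i ∈ Icc (s+1) N, F i s := by
  have h1 : ∀ i : ℕ, Icc 1 (i-1) = Ico 1 i := by
    intro i; ext x; simp only [mem_Icc, mem_Ico]; omega
  have h2 : ∀ a b : ℕ, Icc a b = Ico a (b+1) := fun a b => rfl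
  simp only [h1, h2]
  exact (Finset.sum_Ico_Ico_comm' 1 (N+1) (fun t i => F i t)).symm

lemma sum_shift {M : Type*} [AddCommMonoid M] (N : ℕ) (G : ℕ → M) :
    ∑ s ∈ Icc 1 N, G (s+1) = ∑ s ∈ Icc 1 (N+1), (if 2 ≤ s then G s else 0) := by
  rw [← Finset.sum_filter]
  rw [show Finset.filter (fun s => 2 ≤ s) (Icc 1 (N+1)) = Icc 2 (N+1) by
    ext x; simp only [mem_filter, mem_Icc]; omega]
  apply Finset.sum_nbij' (fun s => s+1) (fun s => s-1)
  · intro a ha; rw [mem_Icc] at ha; rw [mem_Icc]; omega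
  · intro a ha; rw [mem_Icc] at ha; rw [mem_Icc]; omega
  · intro a _; omega
  · intro a ha; rw [mem_Icc] at ha; omega
  · intro a _; rfl

lemma Sser_mul_h (k : ℕ) : Sser * h k = h (k+1) := by
  rw [h_eq, h_eq, pow_succ Sser (k+1)]
  ring

lemma Hser_succ (m k : ℕ) :
    Hser (List.replicate (k+1) m) = U m (Sser * Hser (List.replicate k m)) := by
  rw [Hser, Hser, List.reverse_replicate, List.reverse_replicate, List.replicate_succ]
  rfl

lemma main_base (m : ℕ) (hm : 2 ≤ m) :
    Hser (List.replicate 1 m) = C ((m:ℤ)^(T 1)) * h 1 := by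
  rw [Hser_succ m 0,
    show Hser (List.replicate 0 m) = X * Sser from rfl,
    show Sser * (X * Sser) = h 1 by rw [h_eq]; ring,
    U_h_eq_gam m 1 (by omega) (by omega), Finset.Icc_self, sum_singleton,
    gam_top m 1 (by omega), show T 1 = 1 by rw [T, Finset.Icc_self, sum_singleton], pow_one]

set_option maxHeartbeats 1000000 in
theorem main_ind (m : ℕ) (hm : 2 ≤ m) : ∀ R : ℕ, ∃ b : ℕ → ℤ,
    (Hser (List.replicate (R+1) m)
      = C ((m:ℤ)^(T (R+1))) * h (R+1)
        - ∑ s ∈ Icc 1 R, C (b s) * Hser (List.replicate s m))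
    ∧ ∀ s ∈ Icc 1 R, ((m^(R+1-s) / Nat.gcd m 2 : ℕ) : ℤ) ∣ b s := by
  intro R
  induction R using Nat.strong_induction_on with
  | _ R IH =>
  cases R with
  | zero =>
    refine ⟨fun _ => 0, ?_, ?_⟩
    · rw [show Icc 1 0 = (∅ : Finset ℕ) from rfl, sum_empty, sub_zero]
      exact main_base m hm
    · intro s hs
      rw [mem_Icc] at hs; omega
  | succ Q =>
    obtain ⟨b', hb'1, hb'2⟩ := IH Q (by omega)
    have famex : ∀ i : ℕ, ∃ bb : ℕ → ℤ, i ≤ Q →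
        ((Hser (List.replicate (i+1) m)
          = C ((m:ℤ)^(T (i+1))) * h (i+1)
            - ∑ s ∈ Icc 1 i, C (bb s) * Hser (List.replicate s m))
         ∧ ∀ s ∈ Icc 1 i, ((m^(i+1-s) / Nat.gcd m 2 : ℕ) : ℤ) ∣ bb s) := by
      intro i
      by_cases hi : i ≤ Q
      · obtain ⟨bb, h1, h2⟩ := IH i (by omega)
        exact ⟨bb, fun _ => ⟨h1, h2⟩⟩
      · exact ⟨fun _ => 0, fun hh => absurd hh hi⟩
    choose Bf hBf using famex
    -- the new coefficients
    refine ⟨fun s => -(gam m (Q+2) s * (m:ℤ)^(∑ t ∈ Icc (s+1) (Q+1), t))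
        - (∑ i ∈ Icc (s+1) (Q+1),
            (gam m (Q+2) i * (m:ℤ)^(∑ t ∈ Icc (i+1) (Q+1), t)) * Bf (i-1) s)
        + (if 2 ≤ s then b' (s-1) else 0), ?_, ?_⟩
    · -- the identity
      have hfam : ∀ i', i' ≤ Q →
          C ((m:ℤ)^(T (i'+1))) * h (i'+1)
            = Hser (List.replicate (i'+1) m)
              + ∑ t ∈ Icc 1 i', C (Bf i' t) * Hser (List.replicate t m) := by
        intro i' hi'
        have h1 := (hBf i' hi').1
        rw [h1]; ring
      have step1 : Hser (List.replicate (Q+1+1) m) = U m (Sser * Hser (List.replicate (Q+1) m)) :=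
        Hser_succ m (Q+1)
      have step2 : Sser * Hser (List.replicate (Q+1) m)
          = C ((m:ℤ)^(T (Q+1))) * h (Q+2)
            - ∑ s ∈ Icc 1 Q, C (b' s) * (Sser * Hser (List.replicate s m)) := by
        rw [hb'1, mul_sub, Finset.mul_sum]
        congr 1
        · rw [← Sser_mul_h (Q+1)]; ring
        · exact sum_congr rfl fun s _ => by ring
      have step3 : U m (Sser * Hser (List.replicate (Q+1) m))
          = C ((m:ℤ)^(T (Q+1))) * U m (h (Q+2))
            - ∑ s ∈ Icc 1 Q, C (b' s) * Hser (List.replicate (s+1) m) := by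
        rw [step2, U_sub, U_C_mul, U_sum]
        congr 1
        exact sum_congr rfl fun s _ => by rw [U_C_mul, ← Hser_succ]
      have step4 : C ((m:ℤ)^(T (Q+1))) * U m (h (Q+2))
          = C ((m:ℤ)^(T (Q+2))) * h (Q+2)
            + ∑ i ∈ Icc 1 (Q+1),
                C ((gam m (Q+2) i * (m:ℤ)^(∑ t ∈ Icc (i+1) (Q+1), t)))
                  * (C ((m:ℤ)^(T i)) * h i) := by
        rw [U_h_eq_gam m (Q+2) (by omega) (by omega), Finset.mul_sum,
          show Icc 1 (Q+2) = Icc 1 (Q+1+1) from rfl,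
          Finset.sum_Icc_succ_top (by omega : 1 ≤ Q+1+1), add_comm]
        congr 1
        · rw [show Q+1+1 = Q+2 from rfl, gam_top m (Q+2) (by omega), ← mul_assoc, ← map_mul,
            ← pow_add, show T (Q+1) + (Q+2) = T (Q+2) by
              rw [← T_split (Q+1) (Q+2) (by omega)]
              rw [Finset.Icc_self, sum_singleton]]
        · apply sum_congr rfl
          intro i hi
          rw [mem_Icc] at hi
          have hsc : (m:ℤ)^(T (Q+1)) * gam m (Q+2) i
              = (gam m (Q+2) i * (m:ℤ)^(∑ t ∈ Icc (i+1) (Q+1), t)) * (m:ℤ)^(T i) := by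
            rw [← T_split i (Q+1) hi.2, pow_add]; ring
          calc C ((m:ℤ)^(T (Q+1))) * (C (gam m (Q+2) i) * h i)
              = C ((m:ℤ)^(T (Q+1)) * gam m (Q+2) i) * h i := by rw [map_mul]; ring
            _ = C ((gam m (Q+2) i * (m:ℤ)^(∑ t ∈ Icc (i+1) (Q+1), t)) * (m:ℤ)^(T i)) * h i := by
                rw [hsc]
            _ = C ((gam m (Q+2) i * (m:ℤ)^(∑ t ∈ Icc (i+1) (Q+1), t)))
                  * (C ((m:ℤ)^(T i)) * h i) := by rw [map_mul]; ring
      have step6 : ∑ i ∈ Icc 1 (Q+1),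
            C ((gam m (Q+2) i * (m:ℤ)^(∑ t ∈ Icc (i+1) (Q+1), t)))
              * (C ((m:ℤ)^(T i)) * h i)
          = ∑ i ∈ Icc 1 (Q+1),
              (C ((gam m (Q+2) i * (m:ℤ)^(∑ t ∈ Icc (i+1) (Q+1), t)))
                  * Hser (List.replicate i m)
               + ∑ t ∈ Icc 1 (i-1),
                   C ((gam m (Q+2) i * (m:ℤ)^(∑ t ∈ Icc (i+1) (Q+1), t)) * Bf (i-1) t)
                     * Hser (List.replicate t m)) := by
        apply sum_congr rfl
        intro i hi
        rw [mem_Icc] at hi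
        obtain ⟨i', rfl⟩ : ∃ i', i = i'+1 := ⟨i-1, by omega⟩
        rw [hfam i' (by omega), mul_add, Finset.mul_sum, Nat.add_sub_cancel]
        congr 1
        exact sum_congr rfl fun t _ => by simp only [map_mul]; ring
      have step8 := sum_triangle (Q+1)
        (fun i t => C ((gam m (Q+2) i * (m:ℤ)^(∑ u ∈ Icc (i+1) (Q+1), u)) * Bf (i-1) t)
          * Hser (List.replicate t m))
      have step9 := sum_shift Q (fun u => C (b' (u-1)) * Hser (List.replicate u m))
      simp only [Nat.add_sub_cancel] at step9
      have hb : ∀ s ∈ Icc 1 (Q+1),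
          C (-(gam m (Q+2) s * (m:ℤ)^(∑ t ∈ Icc (s+1) (Q+1), t))
              - (∑ i ∈ Icc (s+1) (Q+1),
                  (gam m (Q+2) i * (m:ℤ)^(∑ t ∈ Icc (i+1) (Q+1), t)) * Bf (i-1) s)
              + (if 2 ≤ s then b' (s-1) else 0)) * Hser (List.replicate s m)
            = -(C ((gam m (Q+2) s * (m:ℤ)^(∑ t ∈ Icc (s+1) (Q+1), t)))
                  * Hser (List.replicate s m))
              - (∑ i ∈ Icc (s+1) (Q+1),
                  C ((gam m (Q+2) i * (m:ℤ)^(∑ u ∈ Icc (i+1) (Q+1), u)) * Bf (i-1) s)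
                    * Hser (List.replicate s m))
              + (if 2 ≤ s then C (b' (s-1)) * Hser (List.replicate s m) else 0) := by
        intro s _
        simp only [map_add, map_sub, map_neg, map_sum, apply_ite C, map_zero,
          add_mul, sub_mul, neg_mul, Finset.sum_mul, ite_mul, zero_mul]
      rw [step1, step3, step4, step6, Finset.sum_add_distrib, step8, step9,
        Finset.sum_congr rfl hb, Finset.sum_add_distrib, Finset.sum_sub_distrib]
      rw [Finset.sum_neg_distrib]
      ring
    · -- divisibility
      intro s hs
      rw [mem_Icc] at hs
      apply dvd_add
      apply dvd_sub
      · -- first summand : -(gam * m^D)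
        rw [dvd_neg]
        rcases Nat.lt_or_ge s (Q+1) with hlt | hge
        · -- s ≤ Q
          have hd : Q+2-s ≤ ∑ t ∈ Icc (s+1) (Q+1), t := Dexp_ge s Q hs.1 (by omega)
          have h1 : ((m^(Q+2-s) / Nat.gcd m 2 : ℕ) : ℤ) ∣ (m:ℤ)^(Q+2-s) :=
            pow_div_gcd_dvd_pow _ (by omega)
          have h2 : ((m:ℤ))^(Q+2-s) ∣ (m:ℤ)^(∑ t ∈ Icc (s+1) (Q+1), t) :=
            pow_dvd_pow _ hd
          exact Dvd.dvd.mul_left (h1.trans h2) _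
        · -- s = Q+1
          have hsQ : s = Q+1 := by omega
          subst hsQ
          rw [show Icc (Q+1+1) (Q+1) = (∅ : Finset ℕ) from Finset.Icc_eq_empty (by omega),
            sum_empty, pow_zero, mul_one, show Q+1+1-(Q+1) = 1 by omega, pow_one]
          exact gam_sub_dvd1 m Q hm
      · -- the sum
        apply Finset.dvd_sum
        intro i hi
        rw [mem_Icc] at hi
        rcases Nat.lt_or_ge i (Q+1) with hlt | hge
        · -- i ≤ Q
          have hd : Q+2-i ≤ ∑ t ∈ Icc (i+1) (Q+1), t := Dexp_ge i Q (by omega) (by omega)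
          have hsplit : ((m^(Q+2-s) / Nat.gcd m 2 : ℕ) : ℤ)
              = ((m^(i-s) / Nat.gcd m 2 : ℕ) : ℤ) * (m:ℤ)^(Q+2-i) := by
            rw [show Q+2-s = (i-s) + (Q+2-i) by omega]
            exact pow_div_gcd_add _ _ (by omega)
          rw [hsplit]
          have hB : ((m^(i-s) / Nat.gcd m 2 : ℕ) : ℤ) ∣ Bf (i-1) s := by
            have := (hBf (i-1) (by omega)).2 s (by rw [mem_Icc]; omega)
            rwa [show (i-1)+1-s = i-s by omega] at this
          have hpow : (m:ℤ)^(Q+2-i) ∣ (m:ℤ)^(∑ t ∈ Icc (i+1) (Q+1), t) :=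
            pow_dvd_pow _ hd
          have := mul_dvd_mul hB hpow
          have heq : gam m (Q+2) i * (m:ℤ)^(∑ t ∈ Icc (i+1) (Q+1), t) * Bf (i-1) s
              = gam m (Q+2) i * (Bf (i-1) s * (m:ℤ)^(∑ t ∈ Icc (i+1) (Q+1), t)) := by ring
          rw [heq]
          exact Dvd.dvd.mul_left this _
        · -- i = Q+1 : here s ≤ Q so Q ≥ 1
          have hiQ : i = Q+1 := by omega
          subst hiQ
          have hQ1 : 1 ≤ Q := by omega
          rw [show Icc (Q+1+1) (Q+1) = (∅ : Finset ℕ) from Finset.Icc_eq_empty (by omega),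
            sum_empty, pow_zero, mul_one]
          have hsplit : ((m^(Q+2-s) / Nat.gcd m 2 : ℕ) : ℤ)
              = ((m^(Q+1-s) / Nat.gcd m 2 : ℕ) : ℤ) * (m:ℤ)^1 := by
            rw [show Q+2-s = (Q+1-s) + 1 by omega]
            exact pow_div_gcd_add _ _ (by omega)
          rw [hsplit]
          have hB : ((m^(Q+1-s) / Nat.gcd m 2 : ℕ) : ℤ) ∣ Bf (Q+1-1) s := by
            have := (hBf (Q+1-1) (by omega)).2 s (by rw [mem_Icc]; omega)
            rwa [show (Q+1-1)+1-s = Q+1-s by omega] at this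
          have hγ : (m:ℤ)^1 ∣ gam m (Q+2) (Q+1) := by
            rw [pow_one]; exact gam_sub_dvd2 m Q hm hQ1
          have := mul_dvd_mul hB hγ
          have heq : gam m (Q+2) (Q+1) * Bf (Q+1-1) s
              = Bf (Q+1-1) s * gam m (Q+2) (Q+1) := by ring
          rw [heq]
          exact this
      · -- the if
        split_ifs with h2s
        · have := hb'2 (s-1) (by rw [mem_Icc]; omega)
          rwa [show Q+1-(s-1) = Q+2-s by omega] at this
        · exact dvd_zero _

/-- The constant case `m₁ = ⋯ = m_r = m`: there exist integers `β_{(j₁,…,j_s)}` with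
`H_{(m,…,m)} = m^{1+2+⋯+r} · h_r - ∑ β_{(j₁,…,j_s)} · H_{(m,…,m)}` (with `s` copies of `m`
in the summand indexed by `{j₁ < … < j_s}`), and `m^{r-s}/gcd(m,2)` divides each
`β_{(j₁,…,j_s)}`. -/
theorem H_constant_beta_dvd (m r : ℕ) (hm : 2 ≤ m) (hr : 1 ≤ r) :
    ∃ β : Finset ℕ → ℤ,
      (Hser (List.replicate r m) =
        PowerSeries.C ((m : ℤ) ^ (∑ t ∈ Finset.Icc 1 r, t)) * h r -
          ∑ J ∈ (Finset.Icc 1 r).powerset.filter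
              (fun J => J.Nonempty ∧ J ≠ Finset.Icc 1 r),
            PowerSeries.C (β J) * Hser (List.replicate J.card m)) ∧
      ∀ J ∈ (Finset.Icc 1 r).powerset.filter
          (fun J => J.Nonempty ∧ J ≠ Finset.Icc 1 r),
        ((m ^ (r - J.card) / Nat.gcd m 2 : ℕ) : ℤ) ∣ β J := by
  obtain ⟨R, rfl⟩ : ∃ R, r = R+1 := ⟨r-1, by omega⟩
  obtain ⟨b, hb1, hb2⟩ := main_ind m hm R
  have hcard : ∀ J ∈ (Finset.Icc 1 (R+1)).powerset.filter
      (fun J => J.Nonempty ∧ J ≠ Finset.Icc 1 (R+1)),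
      J = Icc 1 J.card → 1 ≤ J.card ∧ J.card ≤ R := by
    intro J hJ hP
    rw [mem_filter, mem_powerset] at hJ
    obtain ⟨hsub, hne, hnEq⟩ := hJ
    have h1 : 0 < J.card := Finset.card_pos.mpr hne
    have h2 : J.card ≤ (Icc 1 (R+1)).card := Finset.card_le_card hsub
    rw [Nat.card_Icc] at h2
    have h3 : J.card ≠ R+1 := by
      intro hc
      rw [hc] at hP
      exact hnEq hP
    omega
  refine ⟨fun J => if J = Icc 1 J.card then b J.card else 0, ?_, ?_⟩
  · rw [hb1, show (∑ t ∈ Finset.Icc 1 (R+1), t) = T (R+1) from rfl]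
    congr 1
    have hsplit : ∀ J ∈ (Finset.Icc 1 (R+1)).powerset.filter
        (fun J => J.Nonempty ∧ J ≠ Finset.Icc 1 (R+1)),
        C (if J = Icc 1 J.card then b J.card else 0) * Hser (List.replicate J.card m)
          = if J = Icc 1 J.card then C (b J.card) * Hser (List.replicate J.card m) else 0 := by
      intro J _
      split_ifs
      · rfl
      · rw [map_zero, zero_mul]
    rw [Finset.sum_congr rfl hsplit, ← Finset.sum_filter]
    symm
    apply Finset.sum_nbij' (fun J => J.card) (fun s => Icc 1 s)
    · intro J hJ
      rw [mem_filter] at hJ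
      have := hcard J hJ.1 hJ.2
      rw [mem_Icc]; omega
    · intro s hs
      rw [mem_Icc] at hs
      rw [mem_filter, mem_filter, mem_powerset]
      refine ⟨⟨Finset.Icc_subset_Icc_right (by omega), Finset.nonempty_Icc.mpr (by omega), ?_⟩, ?_⟩
      · intro hEq
        have := congrArg Finset.card hEq
        rw [Nat.card_Icc, Nat.card_Icc] at this
        omega
      · rw [Nat.card_Icc, show s+1-1 = s by omega]
    · intro J hJ
      rw [mem_filter] at hJ
      exact hJ.2.symm
    · intro s hs
      rw [mem_Icc] at hs
      rw [Nat.card_Icc]; omega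
    · intro J _
      rfl
  · intro J hJ
    dsimp only
    by_cases hP : J = Icc 1 J.card
    · rw [if_pos hP]
      have := hcard J hJ hP
      exact hb2 J.card (by rw [mem_Icc]; omega)
    · rw [if_neg hP]
      exact dvd_zero _
end

section
/- Let M = (m_i)_{i=0}^∞ be a sequence of integers with m_0 = 1 and m_i ≥ 2 for all i ≥ 1, and let M' := (1, m_2, m_3, …) be the sequence with m_1 deleted. Then for every integer n ≥ 1: (1) p_M(m_1 n) − p_M(m_1 (n−1)) = p_{M'}(n), and (2) p_M(m_1 n − 1) = p_M(m_1 (n−1)). -/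
/-- `pM m n` = number of partitions of `n` into parts of the form `m 0 * m 1 * ⋯ * m r`. -/
noncomputable def pM (m : ℕ → ℕ) (n : ℕ) : ℕ :=
  Nat.card {p : n.Partition // ∀ j ∈ p.parts, ∃ r : ℕ, j = ∏ i ∈ Finset.range (r + 1), m i}

namespace PMAux

open Multiset

/-- sum mod m1 equals count of ones mod m1 when all parts are 1 or divisible. -/
lemma count_mod (m1 : ℕ) (s : Multiset ℕ) (h : ∀ j ∈ s, j = 1 ∨ m1 ∣ j) :
    s.sum % m1 = s.count 1 % m1 := by
  induction s using Multiset.induction_on with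
  | empty => simp
  | cons a s ih =>
    have ih' := ih (fun j hj => h j (mem_cons_of_mem hj))
    rcases eq_or_ne a 1 with rfl | ha
    · simp only [Multiset.sum_cons, Multiset.count_cons_self]
      rw [Nat.add_mod, ih', ← Nat.add_mod, add_comm]
    · have hd : m1 ∣ a := (h a (mem_cons_self _ _)).resolve_left ha
      obtain ⟨c, rfl⟩ := hd
      rw [Multiset.sum_cons, Multiset.count_cons_of_ne (Ne.symm ha), add_comm,
        Nat.add_mul_mod_self_left, ih']

lemma prod_eq (m : ℕ → ℕ) (hm0 : m 0 = 1) (r : ℕ) :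
    ∏ i ∈ Finset.range (r + 2), m i = m 1 * ∏ i ∈ Finset.range r, m (i + 2) := by
  rw [Finset.prod_range_succ' (fun i => m i), Finset.prod_range_succ' (fun i => m (i + 1)), hm0]
  ring

lemma prod_eq' (m : ℕ → ℕ) (r : ℕ) :
    (∏ i ∈ Finset.range (r + 1), (fun i => if i = 0 then 1 else m (i + 1)) i)
      = ∏ i ∈ Finset.range r, m (i + 2) := by
  rw [Finset.prod_range_succ']
  simp

lemma isM_one (m : ℕ → ℕ) (hm0 : m 0 = 1) :
    ∃ r : ℕ, (1 : ℕ) = ∏ i ∈ Finset.range (r + 1), m i := ⟨0, by simp [hm0]⟩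

lemma isM_div (m : ℕ → ℕ) (hm0 : m 0 = 1) (h2 : 2 ≤ m 1) {j : ℕ}
    (hj : ∃ r : ℕ, j = ∏ i ∈ Finset.range (r + 1), m i) (hj1 : j ≠ 1) :
    m 1 ∣ j ∧ ∃ r : ℕ, j / m 1
      = ∏ i ∈ Finset.range (r + 1), (fun i => if i = 0 then 1 else m (i + 1)) i := by
  obtain ⟨r, rfl⟩ := hj
  match r with
  | 0 => simp [hm0] at hj1
  | (s + 1) =>
    rw [prod_eq m hm0 s]
    refine ⟨Dvd.intro _ rfl, ⟨s, ?_⟩⟩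
    rw [prod_eq' m s, Nat.mul_div_cancel_left _ (by omega)]

lemma isM_mul (m : ℕ → ℕ) (hm0 : m 0 = 1) {k : ℕ}
    (hk : ∃ r : ℕ, k = ∏ i ∈ Finset.range (r + 1), (fun i => if i = 0 then 1 else m (i + 1)) i) :
    ∃ r : ℕ, m 1 * k = ∏ i ∈ Finset.range (r + 1), m i := by
  obtain ⟨r, rfl⟩ := hk
  exact ⟨r + 1, by rw [prod_eq m hm0 r, prod_eq' m r]⟩

/-- Removing `k` ones from a partition of `N + k` (when possible) is a bijection onto
partitions of `N`. -/
def addOnesEquiv (m : ℕ → ℕ) (hm0 : m 0 = 1) (N k : ℕ) :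
    {p : (N + k).Partition //
        (∀ j ∈ p.parts, ∃ r : ℕ, j = ∏ i ∈ Finset.range (r + 1), m i) ∧
          k ≤ p.parts.count 1}
      ≃ {q : N.Partition // ∀ j ∈ q.parts, ∃ r : ℕ, j = ∏ i ∈ Finset.range (r + 1), m i} where
  toFun p :=
    ⟨⟨p.1.parts - Multiset.replicate k 1,
      fun hi => p.1.parts_pos (Multiset.mem_of_le (tsub_le_self) hi), by
        have hle : Multiset.replicate k 1 ≤ p.1.parts :=
          (Multiset.le_count_iff_replicate_le).1 p.2.2
        have := congrArg Multiset.sum (tsub_add_cancel_of_le hle)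
        rw [Multiset.sum_add, Multiset.sum_replicate, smul_eq_mul, mul_one, p.1.parts_sum] at this
        omega⟩,
      fun j hj => p.2.1 j (Multiset.mem_of_le (tsub_le_self) hj)⟩
  invFun q :=
    ⟨⟨Multiset.replicate k 1 + q.1.parts,
      fun hi => by
        rcases Multiset.mem_add.1 hi with h | h
        · rw [Multiset.eq_of_mem_replicate h]; norm_num
        · exact q.1.parts_pos h, by
        rw [Multiset.sum_add, Multiset.sum_replicate, smul_eq_mul, mul_one, q.1.parts_sum,
          add_comm]⟩,
      ⟨fun j hj => by
        rcases Multiset.mem_add.1 hj with h | h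
        · rw [Multiset.eq_of_mem_replicate h]; exact isM_one m hm0
        · exact q.2 j h, by
        rw [Multiset.count_add, Multiset.count_replicate_self]; omega⟩⟩
  left_inv p := by
    have hle : Multiset.replicate k 1 ≤ p.1.parts :=
      (Multiset.le_count_iff_replicate_le).1 p.2.2
    apply Subtype.ext
    apply Nat.Partition.ext
    simpa [add_comm] using tsub_add_cancel_of_le hle
  right_inv q := by
    apply Subtype.ext
    apply Nat.Partition.ext
    simp

/-- Dividing every part by `m 1` is a bijection from one-free partitions of `m 1 * n`
into `M`-parts onto partitions of `n` into `M'`-parts. -/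
def divEquiv (m : ℕ → ℕ) (hm0 : m 0 = 1) (h2 : 2 ≤ m 1) (n : ℕ) :
    {p : (m 1 * n).Partition //
        (∀ j ∈ p.parts, ∃ r : ℕ, j = ∏ i ∈ Finset.range (r + 1), m i) ∧ 1 ∉ p.parts}
      ≃ {q : n.Partition // ∀ j ∈ q.parts, ∃ r : ℕ, j =
          ∏ i ∈ Finset.range (r + 1), (fun i => if i = 0 then 1 else m (i + 1)) i} := by
  have hpos : 0 < m 1 := by omega
  refine
  { toFun := fun p => ?_
    invFun := fun q => ?_
    left_inv := fun p => ?_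
    right_inv := fun q => ?_ }
  · have hdvd : ∀ j ∈ p.1.parts, m 1 ∣ j := fun j hj =>
      (isM_div m hm0 h2 (p.2.1 j hj) (fun h => p.2.2 (h ▸ hj))).1
    have hback : p.1.parts.map (fun j => m 1 * (j / m 1)) = p.1.parts := by
      rw [Multiset.map_congr rfl (fun j hj => Nat.mul_div_cancel' (hdvd j hj))]
      exact Multiset.map_id _
    refine ⟨⟨p.1.parts.map (· / m 1), fun hi => ?_, ?_⟩, fun j hj => ?_⟩
    · obtain ⟨j, hj, rfl⟩ := Multiset.mem_map.1 hi
      exact Nat.div_pos (Nat.le_of_dvd (p.1.parts_pos hj) (hdvd j hj)) hpos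
    · have : (p.1.parts.map (fun j => m 1 * (j / m 1))).sum = m 1 * n := by
        rw [hback, p.1.parts_sum]
      rw [Multiset.sum_map_mul_left] at this
      exact Nat.eq_of_mul_eq_mul_left hpos this
    · obtain ⟨j', hj', rfl⟩ := Multiset.mem_map.1 hj
      exact (isM_div m hm0 h2 (p.2.1 j' hj') (fun h => p.2.2 (h ▸ hj'))).2
  · refine ⟨⟨q.1.parts.map (fun k => m 1 * k), fun hi => ?_, ?_⟩, fun j hj => ?_, fun h1 => ?_⟩
    · obtain ⟨k, hk, rfl⟩ := Multiset.mem_map.1 hi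
      exact Nat.mul_pos hpos (q.1.parts_pos hk)
    · rw [Multiset.sum_map_mul_left, Multiset.map_id', q.1.parts_sum]
    · obtain ⟨k, hk, rfl⟩ := Multiset.mem_map.1 hj
      exact isM_mul m hm0 (q.2 k hk)
    · obtain ⟨k, hk, hk1⟩ := Multiset.mem_map.1 h1
      have := q.1.parts_pos hk
      nlinarith
  · have hdvd : ∀ j ∈ p.1.parts, m 1 ∣ j := fun j hj =>
      (isM_div m hm0 h2 (p.2.1 j hj) (fun h => p.2.2 (h ▸ hj))).1
    apply Subtype.ext
    apply Nat.Partition.ext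
    simp only [Multiset.map_map, Function.comp]
    rw [Multiset.map_congr rfl (fun j hj => Nat.mul_div_cancel' (hdvd j hj))]
    exact Multiset.map_id _
  · apply Subtype.ext
    apply Nat.Partition.ext
    simp only [Multiset.map_map, Function.comp]
    rw [Multiset.map_congr rfl (fun k _ => Nat.mul_div_cancel_left k hpos)]
    exact Multiset.map_id _

end PMAux

open PMAux Multiset

/-- For every `n ≥ 1`: `p_M(m₁ n) - p_M(m₁ (n-1)) = p_{M'}(n)` and
`p_M(m₁ n - 1) = p_M(m₁ (n-1))`, where `M' = (1, m₂, m₃, …)`. -/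
theorem pM_shift_identities (m : ℕ → ℕ) (hm0 : m 0 = 1) (hm : ∀ i, 1 ≤ i → 2 ≤ m i)
    (n : ℕ) (hn : 1 ≤ n) :
    (pM m (m 1 * n) : ℤ) - (pM m (m 1 * (n - 1)) : ℤ) =
        (pM (fun i => if i = 0 then 1 else m (i + 1)) n : ℤ) ∧
      pM m (m 1 * n - 1) = pM m (m 1 * (n - 1)) := by
  classical
  have h2 : 2 ≤ m 1 := hm 1 le_rfl
  set A := m 1 * (n - 1) with hA
  have hmulA : m 1 * n = A + m 1 := by
    rw [hA, ← Nat.mul_succ]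
    congr 1
    omega
  -- every M-part is 1 or divisible by m 1
  have hdvd1 : ∀ j : ℕ, (∃ r : ℕ, j = ∏ i ∈ Finset.range (r + 1), m i) → j = 1 ∨ m 1 ∣ j := by
    intro j hj
    by_cases hj1 : j = 1
    · exact Or.inl hj1
    · exact Or.inr (isM_div m hm0 h2 hj hj1).1
  -- identity (2)
  have key2 : pM m (A + (m 1 - 1)) = pM m A := by
    refine Nat.card_congr ((Equiv.subtypeEquivRight ?_).trans (addOnesEquiv m hm0 A (m 1 - 1)))
    intro p
    refine ⟨fun h => ⟨h, ?_⟩, And.left⟩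
    have hmod := count_mod (m 1) p.parts (fun j hj => hdvd1 j (h j hj))
    rw [p.parts_sum] at hmod
    have : (A + (m 1 - 1)) % m 1 = m 1 - 1 := by
      rw [hA, add_comm, Nat.add_mul_mod_self_left]
      exact Nat.mod_eq_of_lt (by omega)
    rw [this] at hmod
    have := Nat.mod_le (p.parts.count 1) (m 1)
    omega
  -- identity (1)
  have key1 : pM m (A + m 1) = pM m A +
      pM (fun i => if i = 0 then 1 else m (i + 1)) n := by
    rw [show pM m (A + m 1) =
        Nat.card {p : (A + m 1).Partition //
          ∀ j ∈ p.parts, ∃ r : ℕ, j = ∏ i ∈ Finset.range (r + 1), m i} from rfl]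
    rw [← Nat.card_congr (Equiv.sumCompl
      (fun p : {p : (A + m 1).Partition //
          ∀ j ∈ p.parts, ∃ r : ℕ, j = ∏ i ∈ Finset.range (r + 1), m i} =>
        1 ∈ p.1.parts))]
    rw [Nat.card_sum]
    congr 1
    · -- partitions containing a 1
      refine Nat.card_congr (((Equiv.subtypeSubtypeEquivSubtypeInter
        (fun p : (A + m 1).Partition =>
          ∀ j ∈ p.parts, ∃ r : ℕ, j = ∏ i ∈ Finset.range (r + 1), m i)
        (fun p => 1 ∈ p.parts)).trans
        (Equiv.subtypeEquivRight ?_)).trans (addOnesEquiv m hm0 A (m 1)))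
      intro p
      constructor
      · rintro ⟨hP, hmem⟩
        refine ⟨hP, ?_⟩
        have hmod := count_mod (m 1) p.parts (fun j hj => hdvd1 j (hP j hj))
        rw [p.parts_sum] at hmod
        have hz : (A + m 1) % m 1 = 0 := by
          rw [hA, add_comm, Nat.add_mul_mod_self_left, Nat.mod_self]
        rw [hz] at hmod
        have hpos : 0 < p.parts.count 1 := Multiset.count_pos.2 hmem
        exact Nat.le_of_dvd hpos (Nat.dvd_of_mod_eq_zero hmod.symm)
      · rintro ⟨hP, hc⟩
        exact ⟨hP, Multiset.count_pos.1 (by omega)⟩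
    · -- partitions with no 1
      have hcast : {p : (A + m 1).Partition //
            (∀ j ∈ p.parts, ∃ r : ℕ, j = ∏ i ∈ Finset.range (r + 1), m i) ∧ 1 ∉ p.parts}
          ≃ {p : (m 1 * n).Partition //
            (∀ j ∈ p.parts, ∃ r : ℕ, j = ∏ i ∈ Finset.range (r + 1), m i) ∧ 1 ∉ p.parts} := by
        rw [← hmulA]
      refine Nat.card_congr (((Equiv.subtypeSubtypeEquivSubtypeInter
        (fun p : (A + m 1).Partition =>
          ∀ j ∈ p.parts, ∃ r : ℕ, j = ∏ i ∈ Finset.range (r + 1), m i)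
        (fun p => 1 ∉ p.parts)).trans
        hcast).trans (divEquiv m hm0 h2 n))
  constructor
  · rw [hmulA, key1]
    push_cast
    ring
  · have hsub1 : m 1 * n - 1 = A + (m 1 - 1) := by omega
    rw [hsub1, key2]
end

section
/- Let M = (m_i)_{i=0}^∞ be a sequence of integers with m_0 = 1 and m_i ≥ 2 for all i ≥ 1, and let M' := (1, m_2, m_3, …) be the sequence with m_1 deleted. Then in ℤ⟦q⟧: Σ_{n≥1} p_M(m_1 n − 1) q^n = (q/(1−q)) · F_{M'}(q). -/
/-- Generating function of `pM`. -/
noncomputable def FM (m : ℕ → ℕ) : PowerSeries ℤ := PowerSeries.mk fun n => (pM m n : ℤ)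

private lemma prodM_succ (m : ℕ → ℕ) (hm0 : m 0 = 1) (r : ℕ) :
    ∏ i ∈ Finset.range (r + 2), m i
      = m 1 * ∏ i ∈ Finset.range (r + 1), (if i = 0 then 1 else m (i + 1)) := by
  induction r with
  | zero => simp [Finset.prod_range_succ, hm0]
  | succ r ih =>
      show ∏ i ∈ Finset.range (r + 2 + 1), m i
          = m 1 * ∏ i ∈ Finset.range (r + 1 + 1), (if i = 0 then 1 else m (i + 1))
      rw [Finset.prod_range_succ m (r + 2), ih,
        Finset.prod_range_succ (fun i => if i = 0 then 1 else m (i + 1)) (r + 1),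
        if_neg (by omega : ¬ (r + 1 = 0))]
      ring

private def bwd (m : ℕ → ℕ) (n : ℕ) (hm0 : m 0 = 1) (hm : ∀ i, 1 ≤ i → 2 ≤ m i)
    (x : Σ j : Fin (n + 1),
      {p : (j : ℕ).Partition // ∀ k ∈ p.parts, ∃ r : ℕ,
        k = ∏ i ∈ Finset.range (r + 1), (if i = 0 then 1 else m (i + 1))}) :
    {p : (m 1 * (n + 1) - 1).Partition // ∀ j ∈ p.parts, ∃ r : ℕ,
      j = ∏ i ∈ Finset.range (r + 1), m i} := by
  have hm1 : 2 ≤ m 1 := hm 1 le_rfl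
  refine ⟨⟨Multiset.replicate (m 1 * (n + 1) - 1 - m 1 * x.1) 1
      + x.2.1.parts.map (fun s => m 1 * s), ?_, ?_⟩, ?_⟩
  · intro i hi
    rcases Multiset.mem_add.1 hi with h | h
    · have := Multiset.eq_of_mem_replicate h; omega
    · obtain ⟨s, hs, rfl⟩ := Multiset.mem_map.1 h
      exact Nat.mul_pos (by omega) (x.2.1.parts_pos hs)
  · rw [Multiset.sum_add, Multiset.sum_replicate, smul_eq_mul, mul_one,
      Multiset.sum_map_mul_left, Multiset.map_id', x.2.1.parts_sum]
    have hj : (x.1 : ℕ) ≤ n := Nat.lt_succ_iff.1 x.1.isLt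
    have h1 : m 1 * (x.1 : ℕ) ≤ m 1 * n := Nat.mul_le_mul_left _ hj
    have h2 : m 1 * (n + 1) = m 1 * n + m 1 := by ring
    omega
  · intro k hk
    rcases Multiset.mem_add.1 hk with h | h
    · have := Multiset.eq_of_mem_replicate h
      exact ⟨0, by simpa [hm0] using this⟩
    · obtain ⟨s, hs, rfl⟩ := Multiset.mem_map.1 h
      obtain ⟨r, hr⟩ := x.2.2 s hs
      exact ⟨r + 1, by rw [hr, prodM_succ m hm0 r]⟩

private lemma key (m : ℕ → ℕ) (hm0 : m 0 = 1) (hm : ∀ i, 1 ≤ i → 2 ≤ m i) (n : ℕ) :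
    pM m (m 1 * (n + 1) - 1)
      = ∑ j ∈ Finset.range (n + 1), pM (fun i => if i = 0 then 1 else m (i + 1)) j := by
  classical
  have hm1 : 2 ≤ m 1 := hm 1 le_rfl
  have hm1pos : 0 < m 1 := by omega
  have hbij : Function.Bijective (bwd m n hm0 hm) := by
    constructor
    · rintro ⟨⟨j1, hj1⟩, ⟨p1, hp1⟩⟩ ⟨⟨j2, hj2⟩, ⟨p2, hp2⟩⟩ h
      have hp := congrArg (fun z => z.1.parts) h
      simp only [bwd] at hp
      have hne1 : ∀ (p : Multiset ℕ) (hpos : ∀ s ∈ p, 0 < s),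
          Multiset.count 1 (p.map (fun s => m 1 * s)) = 0 := by
        intro p hpos
        rw [Multiset.count_eq_zero]
        intro hmem
        obtain ⟨s, hs, hval⟩ := Multiset.mem_map.1 hmem
        have := hpos s hs
        have : 2 * 1 ≤ m 1 * s := Nat.mul_le_mul hm1 this
        omega
      have hc := congrArg (Multiset.count 1) hp
      simp only [Multiset.count_add, Multiset.count_replicate_self,
        hne1 p1.parts (fun s hs => p1.parts_pos hs),
        hne1 p2.parts (fun s hs => p2.parts_pos hs), add_zero] at hc
      have hj1' : m 1 * j1 ≤ m 1 * n := Nat.mul_le_mul_left _ (Nat.lt_succ_iff.1 hj1)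
      have hj2' : m 1 * j2 ≤ m 1 * n := Nat.mul_le_mul_left _ (Nat.lt_succ_iff.1 hj2)
      have hmuladd : m 1 * (n + 1) = m 1 * n + m 1 := by ring
      have hjj : m 1 * j1 = m 1 * j2 := by omega
      have hj : j1 = j2 := Nat.eq_of_mul_eq_mul_left hm1pos hjj
      subst hj
      rw [hc] at hp
      have hmaps := add_left_cancel hp
      have hparts : p1.parts = p2.parts :=
        Multiset.map_injective (fun a b hab => Nat.eq_of_mul_eq_mul_left hm1pos hab) hmaps
      have : p1 = p2 := Nat.Partition.ext hparts
      subst this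
      rfl
    · rintro ⟨p, hp⟩
      set q : Multiset ℕ := p.parts.filter (fun x => ¬ x = 1) with hqdef
      have hq1 : ∀ x ∈ q, ∃ r : ℕ,
          x = m 1 * ∏ i ∈ Finset.range (r + 1), (if i = 0 then 1 else m (i + 1)) := by
        intro x hx
        obtain ⟨hxp, hxne⟩ := Multiset.mem_filter.1 hx
        obtain ⟨r, hr⟩ := hp x hxp
        cases r with
        | zero => simp [hm0] at hr; exact absurd hr hxne
        | succ r => exact ⟨r, by rw [hr, prodM_succ m hm0 r]⟩
      have hdvd : ∀ x ∈ q, m 1 * (x / m 1) = x := by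
        intro x hx
        obtain ⟨r, hr⟩ := hq1 x hx
        rw [hr, Nat.mul_div_cancel_left _ hm1pos]
      set q' : Multiset ℕ := q.map (fun x => x / m 1) with hq'def
      have hmapback : q'.map (fun s => m 1 * s) = q := by
        rw [hq'def, Multiset.map_map]
        exact (Multiset.map_congr rfl hdvd).trans (Multiset.map_id' q)
      have hsum : m 1 * q'.sum = q.sum := by
        rw [← hmapback, Multiset.sum_map_mul_left, Multiset.map_id']
      have hones : p.parts.filter (fun x => x = 1)
          = Multiset.replicate (Multiset.count 1 p.parts) 1 := Multiset.filter_eq' p.parts 1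
      have hsplit : p.parts.filter (fun x => x = 1) + q = p.parts :=
        Multiset.filter_add_not (fun x => x = 1) p.parts
      have hcsum : Multiset.count 1 p.parts + q.sum = m 1 * (n + 1) - 1 := by
        have hps := p.parts_sum
        rw [← hsplit, Multiset.sum_add, hones, Multiset.sum_replicate, smul_eq_mul,
          mul_one] at hps
        exact hps
      have hmn : 0 < m 1 * (n + 1) := Nat.mul_pos hm1pos (Nat.succ_pos n)
      have hlt : q'.sum < n + 1 := by
        refine Nat.lt_of_mul_lt_mul_left (a := m 1) ?_
        omega
      have hm'pos : ∀ i : ℕ, 0 < (if i = 0 then 1 else m (i + 1)) := by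
        intro i
        by_cases h : i = 0 <;> simp [h]
        have := hm (i + 1) (by omega); omega
      refine ⟨⟨⟨q'.sum, hlt⟩, ⟨⟨q', ?_, rfl⟩, ?_⟩⟩, ?_⟩
      · intro i hi
        obtain ⟨x, hx, rfl⟩ := Multiset.mem_map.1 hi
        obtain ⟨r, hr⟩ := hq1 x hx
        rw [hr, Nat.mul_div_cancel_left _ hm1pos]
        exact Finset.prod_pos fun i _ => hm'pos i
      · intro k hk
        obtain ⟨x, hx, rfl⟩ := Multiset.mem_map.1 hk
        obtain ⟨r, hr⟩ := hq1 x hx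
        exact ⟨r, by rw [hr, Nat.mul_div_cancel_left _ hm1pos]⟩
      · apply Subtype.ext
        apply Nat.Partition.ext
        show Multiset.replicate (m 1 * (n + 1) - 1 - m 1 * q'.sum) 1
            + q'.map (fun s => m 1 * s) = p.parts
        rw [hmapback]
        have hc : m 1 * (n + 1) - 1 - m 1 * q'.sum = Multiset.count 1 p.parts := by omega
        rw [hc, ← hones]
        exact hsplit
  haveI : ∀ j : Fin (n + 1), Fintype {p : (j : ℕ).Partition // ∀ k ∈ p.parts, ∃ r : ℕ,
      k = ∏ i ∈ Finset.range (r + 1), (if i = 0 then 1 else m (i + 1))} :=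
    fun j => Fintype.ofFinite _
  have h1 : pM m (m 1 * (n + 1) - 1)
      = Nat.card (Σ j : Fin (n + 1), {p : (j : ℕ).Partition // ∀ k ∈ p.parts, ∃ r : ℕ,
        k = ∏ i ∈ Finset.range (r + 1), (if i = 0 then 1 else m (i + 1))}) :=
    (Nat.card_congr (Equiv.ofBijective _ hbij)).symm
  rw [h1, Nat.card_eq_fintype_card, Fintype.card_sigma, ← Fin.sum_univ_eq_sum_range]
  exact Finset.sum_congr rfl fun j _ => Nat.card_eq_fintype_card.symm

/-- `∑_{n≥1} p_M(m₁ n - 1) qⁿ = (q/(1-q)) · F_{M'}(q)`, where `M' = (1, m₂, m₃, …)`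
and `invUnitsSub 1` is the inverse of `1 - q` in `ℤ⟦q⟧`. -/
theorem genFun_m1_eq (m : ℕ → ℕ) (hm0 : m 0 = 1) (hm : ∀ i, 1 ≤ i → 2 ≤ m i) :
    (PowerSeries.mk fun n => if n = 0 then 0 else (pM m (m 1 * n - 1) : ℤ)) =
      PowerSeries.X * PowerSeries.invUnitsSub (1 : ℤˣ) *
        FM (fun i => if i = 0 then 1 else m (i + 1)) := by
  ext n
  rw [PowerSeries.coeff_mk]
  cases n with
  | zero =>
      simp [PowerSeries.coeff_zero_eq_constantCoeff, map_mul]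
  | succ n =>
      rw [if_neg (Nat.succ_ne_zero n), mul_assoc, PowerSeries.coeff_succ_X_mul,
        PowerSeries.coeff_mul]
      simp only [PowerSeries.coeff_invUnitsSub, one_pow, one_divp, Units.val_one, one_mul,
        FM, PowerSeries.coeff_mk]
      rw [Finset.Nat.sum_antidiagonal_eq_sum_range_succ_mk]
      rw [key m hm0 hm n, Nat.cast_sum]
      have := Finset.sum_range_reflect
        (fun j => (pM (fun i => if i = 0 then 1 else m (i + 1)) j : ℤ)) (n + 1)
      simp only [Nat.add_sub_cancel] at this
      rw [← this]
      simp
end
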